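/- For all vectors x, y, z ∈ ℝ³, one has ‖y‖·‖x ∧ z‖ ≤ ‖z‖·‖x ∧ y‖ + 2‖x‖·‖y ∧ z‖, where ∧ denotes the cross product and ‖·‖ the Euclidean norm. -/

import Mathlib

/-- The cross product on `ℝ³` viewed as Euclidean space. -/
noncomputable def cross3 (x y : EuclideanSpace ℝ (Fin 3)) : EuclideanSpace ℝ (Fin 3) :=
  (WithLp.equiv 2 (Fin 3 → ℝ)).symm
    ![x 1 * y 2 - x 2 * y 1, x 2 * y 0 - x 0 * y 2, x 0 * y 1 - x 1 * y 0]

lemma cross3_apply (a b : EuclideanSpace ℝ (Fin 3)) :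
    cross3 a b 0 = a 1 * b 2 - a 2 * b 1 ∧
    cross3 a b 1 = a 2 * b 0 - a 0 * b 2 ∧
    cross3 a b 2 = a 0 * b 1 - a 1 * b 0 := by
  refine ⟨?_, ?_, ?_⟩ <;> simp [cross3]

lemma norm_sq3 (v : EuclideanSpace ℝ (Fin 3)) :
    ‖v‖ ^ 2 = v 0 ^ 2 + v 1 ^ 2 + v 2 ^ 2 := by
  rw [EuclideanSpace.norm_eq, Real.sq_sqrt (by positivity)]
  simp [Fin.sum_univ_three, sq_abs]

lemma inner3 (a b : EuclideanSpace ℝ (Fin 3)) :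
    inner ℝ a b = a 0 * b 0 + a 1 * b 1 + a 2 * b 2 := by
  simp [PiLp.inner_apply, Fin.sum_univ_three, mul_comm]

lemma cross3_norm_le (a b : EuclideanSpace ℝ (Fin 3)) :
    ‖cross3 a b‖ ≤ ‖a‖ * ‖b‖ := by
  have h := sq_nonneg (a 0 * b 0 + a 1 * b 1 + a 2 * b 2)
  have ha := norm_sq3 a
  have hb := norm_sq3 b
  have hc := norm_sq3 (cross3 a b)
  obtain ⟨h0, h1, h2⟩ := cross3_apply a b
  rw [h0, h1, h2] at hc
  have hsq : ‖cross3 a b‖ ^ 2 ≤ (‖a‖ * ‖b‖) ^ 2 := by nlinarith [h]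
  exact (pow_le_pow_iff_left₀ (norm_nonneg _)
    (mul_nonneg (norm_nonneg a) (norm_nonneg b)) two_ne_zero).mp hsq

lemma key_identity (x y z : EuclideanSpace ℝ (Fin 3)) :
    (‖y‖ ^ 2) • cross3 x z =
      (inner ℝ y z) • cross3 x y - cross3 x (cross3 y (cross3 y z)) := by
  have hy := norm_sq3 y
  have hi := inner3 y z
  apply (WithLp.equiv 2 (Fin 3 → ℝ)).injective
  funext i
  fin_cases i <;>
    simp [cross3, hy, hi] <;> ring

theorem stmt9 (x y z : EuclideanSpace ℝ (Fin 3)) :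
    ‖y‖ * ‖cross3 x z‖ ≤ ‖z‖ * ‖cross3 x y‖ + 2 * ‖x‖ * ‖cross3 y z‖ := by
  rcases eq_or_lt_of_le (norm_nonneg y) with hy | hy
  · rw [← hy, zero_mul]
    positivity
  · have key : ‖y‖ ^ 2 * ‖cross3 x z‖ ≤
        ‖y‖ * ‖z‖ * ‖cross3 x y‖ + ‖x‖ * (‖y‖ * ‖cross3 y z‖) := by
      calc ‖y‖ ^ 2 * ‖cross3 x z‖ = ‖(‖y‖ ^ 2) • cross3 x z‖ := by
            rw [norm_smul]; simp [abs_of_nonneg (sq_nonneg ‖y‖)]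
        _ = ‖(inner ℝ y z) • cross3 x y - cross3 x (cross3 y (cross3 y z))‖ := by
            rw [key_identity]
        _ ≤ ‖(inner ℝ y z) • cross3 x y‖ + ‖cross3 x (cross3 y (cross3 y z))‖ :=
            norm_sub_le _ _
        _ ≤ ‖y‖ * ‖z‖ * ‖cross3 x y‖ + ‖x‖ * (‖y‖ * ‖cross3 y z‖) := by
            gcongr ?_ + ?_
            · rw [norm_smul]
              gcongr
              exact abs_real_inner_le_norm y z
            · calc ‖cross3 x (cross3 y (cross3 y z))‖
                  ≤ ‖x‖ * ‖cross3 y (cross3 y z)‖ := cross3_norm_le _ _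
                _ ≤ ‖x‖ * (‖y‖ * ‖cross3 y z‖) := by
                    gcongr
                    exact cross3_norm_le _ _
    have h2 : ‖x‖ * (‖y‖ * ‖cross3 y z‖) ≤ 2 * ‖x‖ * (‖y‖ * ‖cross3 y z‖) := by
      have : 0 ≤ ‖x‖ * (‖y‖ * ‖cross3 y z‖) := by positivity
      linarith
    calc ‖y‖ * ‖cross3 x z‖ = (‖y‖ ^ 2 * ‖cross3 x z‖) / ‖y‖ := by
          field_simp
      _ ≤ (‖y‖ * (‖z‖ * ‖cross3 x y‖ + 2 * ‖x‖ * ‖cross3 y z‖)) / ‖y‖ :=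
          (div_le_div_iff_of_pos_right hy).mpr (by nlinarith [key, h2])
      _ = ‖z‖ * ‖cross3 x y‖ + 2 * ‖x‖ * ‖cross3 y z‖ := by
          field_simp
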